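/- Let k ≥ 0 and let f : ℕ → ℕ. Suppose that every unweighted undirected simple graph on N vertices admits a (2k+1)-additive spanner with at most f(N) edges. Then every unweighted undirected simple graph on n vertices admits a (2k)-additive spanner with at most f(2n) edges. -/

import Mathlib

/-- `H` is a `k`-additive spanner of `G`: a spanning subgraph preserving all
pairwise (extended) distances up to additive error `k`. -/
def IsAdditiveSpanner {V : Type*} (G H : SimpleGraph V) (k : ℕ) : Prop :=
  H ≤ G ∧ ∀ u v : V, H.edist u v ≤ G.edist u v + k

/-- The "bipartite double" of `G`: two copies of `V`, where `(x,i)` and `(y,j)` are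
adjacent iff `i ≠ j` and (`x = y` or `x ~ y`). -/
def bipDouble {V : Type*} (G : SimpleGraph V) : SimpleGraph (V × Bool) where
  Adj x y := x.2 ≠ y.2 ∧ (x.1 = y.1 ∨ G.Adj x.1 y.1)
  symm := by
    refine ⟨?_⟩; rintro x y ⟨h1, h2⟩
    exact ⟨h1.symm, by rcases h2 with h | h; exact Or.inl h.symm; exact Or.inr h.symm⟩
  loopless := by refine ⟨?_⟩; rintro x ⟨h1, _⟩; exact h1 rfl

/-- Every walk in a subgraph of `bipDouble G` flips the boolean coordinate at each
step, so the parity of its length is determined by the endpoints. -/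
lemma bipDouble_walk_parity {V : Type*} {G : SimpleGraph V} {H' : SimpleGraph (V × Bool)}
    (hle : H' ≤ bipDouble G) {x y : V × Bool} (p : H'.Walk x y) :
    (Even p.length ↔ x.2 = y.2) := by
  induction p with
  | nil => simp
  | @cons a b c h p ih =>
    have hne : a.2 ≠ b.2 := (hle h).1
    simp only [SimpleGraph.Walk.length_cons, Nat.even_add_one, ih]
    revert hne
    cases a.2 <;> cases b.2 <;> cases c.2 <;> simp

/-- Walks in `G` lift to walks in `bipDouble G` of the same length. -/
lemma bipDouble_lift {V : Type*} {G : SimpleGraph V} {u v : V} (p : G.Walk u v) (i : Bool) :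
    ∃ (j : Bool) (q : (bipDouble G).Walk (u, i) (v, j)), q.length = p.length := by
  induction p generalizing i with
  | nil => exact ⟨i, SimpleGraph.Walk.nil, rfl⟩
  | @cons a b c h p ih =>
    obtain ⟨j, q, hq⟩ := ih (!i)
    have hadj : (bipDouble G).Adj (a, i) (b, !i) := ⟨by simp, Or.inr h⟩
    exact ⟨j, SimpleGraph.Walk.cons hadj q, by simp [hq]⟩

/-- Projecting a walk in a subgraph of `bipDouble G` down to the first coordinate
bounds the `edist` in the projected graph. -/
lemma bipDouble_project {V : Type*} {G : SimpleGraph V} {H' : SimpleGraph (V × Bool)}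
    (hle : H' ≤ bipDouble G) {x y : V × Bool} (p : H'.Walk x y) :
    (SimpleGraph.fromEdgeSet (Sym2.map Prod.fst '' H'.edgeSet) ⊓ G).edist x.1 y.1
      ≤ p.length := by
  set H := SimpleGraph.fromEdgeSet (Sym2.map Prod.fst '' H'.edgeSet) ⊓ G with hH
  induction p with
  | nil => simp [SimpleGraph.edist_self]
  | @cons a b c h p ih =>
    by_cases hab : a.1 = b.1
    · rw [hab]
      refine ih.trans ?_
      simp only [SimpleGraph.Walk.length_cons]
      exact_mod_cast Nat.cast_le.mpr (Nat.le_succ _)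
    · simp only [SimpleGraph.Walk.length_cons]
      have hGadj : G.Adj a.1 b.1 := by
        rcases (hle h).2 with h' | h'
        · exact absurd h' hab
        · exact h'
      have hHadj : H.Adj a.1 b.1 := by
        constructor
        · rw [SimpleGraph.fromEdgeSet_adj]
          refine ⟨⟨s(a, b), (SimpleGraph.mem_edgeSet H').mpr h, by simp⟩, hab⟩
        · exact hGadj
      calc H.edist a.1 c.1 ≤ H.edist a.1 b.1 + H.edist b.1 c.1 := SimpleGraph.edist_triangle
        _ ≤ 1 + p.length :=
            add_le_add (le_of_eq (SimpleGraph.edist_eq_one_iff_adj.mpr hHadj)) ih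
        _ = ((p.length + 1 : ℕ) : ℕ∞) := by push_cast; ring

theorem even_spanner_from_odd_spanner (k : ℕ) (f : ℕ → ℕ)
    (hodd : ∀ (W : Type) [Fintype W] (G : SimpleGraph W),
      ∃ H : SimpleGraph W, IsAdditiveSpanner G H (2 * k + 1) ∧
        H.edgeSet.ncard ≤ f (Fintype.card W)) :
    ∀ (V : Type) [Fintype V] (G : SimpleGraph V),
      ∃ H : SimpleGraph V, IsAdditiveSpanner G H (2 * k) ∧
        H.edgeSet.ncard ≤ f (2 * Fintype.card V) := by
  intro V _ G
  obtain ⟨H', ⟨hle', hdist'⟩, hcard'⟩ := hodd (V × Bool) (bipDouble G)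
  refine ⟨SimpleGraph.fromEdgeSet (Sym2.map Prod.fst '' H'.edgeSet) ⊓ G,
    ⟨inf_le_right, ?_⟩, ?_⟩
  · intro u v
    rcases eq_or_ne (G.edist u v) ⊤ with htop | htop
    · rw [htop, top_add]; exact le_top
    · obtain ⟨p, hp⟩ := SimpleGraph.exists_walk_of_edist_ne_top htop
      obtain ⟨j, q, hq⟩ := bipDouble_lift p false
      -- H' distance between the lifted endpoints
      have h0 : (bipDouble G).edist (u, false) (v, j) ≤ (p.length : ℕ∞) :=
        (SimpleGraph.edist_le q).trans_eq (by exact_mod_cast hq)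
      have h1 : H'.edist (u, false) (v, j) ≤ ((p.length + 2 * k + 1 : ℕ) : ℕ∞) := by
        refine (hdist' (u, false) (v, j)).trans ?_
        push_cast
        calc (bipDouble G).edist (u, false) (v, j) + (2 * ↑k + 1)
            ≤ (p.length : ℕ∞) + (2 * ↑k + 1) := add_le_add h0 le_rfl
          _ = ↑p.length + 2 * ↑k + 1 := by ring
      have hne : H'.edist (u, false) (v, j) ≠ ⊤ := by
        intro h
        rw [h] at h1
        exact ENat.coe_ne_top _ (top_le_iff.mp h1)
      obtain ⟨r, hr⟩ := SimpleGraph.exists_walk_of_edist_ne_top hne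
      -- parity facts
      have hq_par : Even p.length ↔ (false = j) := by
        rw [← hq]; exact bipDouble_walk_parity le_rfl q
      have hr_par : Even r.length ↔ (false = j) := bipDouble_walk_parity hle' r
      have hlen : r.length ≤ p.length + 2 * k + 1 := by
        have : (r.length : ℕ∞) ≤ ((p.length + 2 * k + 1 : ℕ) : ℕ∞) := by
          rw [hr]; exact h1
        exact_mod_cast this
      have hlen2 : r.length ≤ p.length + 2 * k := by
        have h2 : r.length % 2 = p.length % 2 := by
          rcases Nat.even_or_odd p.length with he | ho
          · have := hr_par.mpr (hq_par.mp he)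
            rw [Nat.even_iff] at he this; omega
          · have hne' : ¬ Even p.length := Nat.not_even_iff_odd.mpr ho
            have : ¬ Even r.length := fun hc => hne' (hq_par.mpr (hr_par.mp hc))
            rw [Nat.not_even_iff] at hne' this; omega
        omega
      calc (SimpleGraph.fromEdgeSet (Sym2.map Prod.fst '' H'.edgeSet) ⊓ G).edist u v
          ≤ (r.length : ℕ∞) := bipDouble_project hle' r
        _ ≤ ((p.length + 2 * k : ℕ) : ℕ∞) := by exact_mod_cast hlen2
        _ = G.edist u v + (2 * k : ℕ) := by rw [← hp]; push_cast; ring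
  · have hsub : (SimpleGraph.fromEdgeSet (Sym2.map Prod.fst '' H'.edgeSet) ⊓ G).edgeSet
        ⊆ Sym2.map Prod.fst '' H'.edgeSet := by
      refine (SimpleGraph.edgeSet_mono inf_le_left).trans ?_
      rw [SimpleGraph.edgeSet_fromEdgeSet]
      exact Set.diff_subset
    calc (SimpleGraph.fromEdgeSet (Sym2.map Prod.fst '' H'.edgeSet) ⊓ G).edgeSet.ncard
        ≤ (Sym2.map Prod.fst '' H'.edgeSet).ncard :=
          Set.ncard_le_ncard hsub (Set.toFinite _)
      _ ≤ H'.edgeSet.ncard := Set.ncard_image_le (Set.toFinite _)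
      _ ≤ f (Fintype.card (V × Bool)) := hcard'
      _ = f (2 * Fintype.card V) := by
          rw [Fintype.card_prod, Fintype.card_bool, mul_comm]
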